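/- Let g : ℝⁿ → ℝ be differentiable with L-Lipschitz gradient ∇g, where 0 ≤ L ≤ 1. Then for all y, z ∈ ℝⁿ: g(z) − (1/2)‖∇g(z)‖² + (1/2)‖z − ∇g(z) − y‖² ≥ g(y) + ((1−L)/2)·‖z − y‖². In particular the function z ↦ g(z) − (1/2)‖∇g(z)‖² + (1/2)‖z − ∇g(z) − y‖² attains its minimum value g(y) at z = y, and if L < 1 this minimizer is unique. -/

import Mathlib

open InnerProductSpace

lemma descent_aux {n : ℕ} (g : EuclideanSpace ℝ (Fin n) → ℝ)
    (gradg : EuclideanSpace ℝ (Fin n) → EuclideanSpace ℝ (Fin n))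
    (hgrad : ∀ x, HasGradientAt g (gradg x) x)
    (L : ℝ) (hlip : ∀ x x', ‖gradg x - gradg x'‖ ≤ L * ‖x - x'‖)
    (x y : EuclideanSpace ℝ (Fin n)) :
    g y ≤ g x + ⟪gradg x, y - x⟫_ℝ + L / 2 * ‖y - x‖ ^ 2 := by
  set a : ℝ := ⟪gradg x, y - x⟫_ℝ with ha
  set b : ℝ := L / 2 * ‖y - x‖ ^ 2 with hb
  set c : ℝ → EuclideanSpace ℝ (Fin n) := fun t => x + t • (y - x) with hc
  set ψ : ℝ → ℝ := fun t => g (c t) - t * a - t ^ 2 * b with hψ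
  have hcderiv : ∀ t : ℝ, HasDerivAt c (y - x) t := by
    intro t
    have := ((hasDerivAt_id t).smul_const (y - x)).const_add x
    simp only [id, one_smul] at this
    exact this
  have hψderiv : ∀ t : ℝ, HasDerivAt ψ (⟪gradg (c t), y - x⟫_ℝ - a - 2 * t * b) t := by
    intro t
    have h1 : HasDerivAt (fun t => g (c t)) (⟪gradg (c t), y - x⟫_ℝ) t := by
      have := ((hgrad (c t)).hasFDerivAt).comp_hasDerivAt t (hcderiv t)
      exact this
    have h2 : HasDerivAt (fun t : ℝ => t * a) a t := by
      simpa using (hasDerivAt_id t).mul_const a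
    have h3 : HasDerivAt (fun t : ℝ => t ^ 2 * b) (2 * t * b) t := by
      have := (hasDerivAt_pow 2 t).mul_const b
      simpa [mul_comm] using this
    exact (h1.sub h2).sub h3
  have hanti : AntitoneOn ψ (Set.Icc (0:ℝ) 1) := by
    apply antitoneOn_of_deriv_nonpos (convex_Icc 0 1)
    · exact fun t _ => ((hψderiv t).continuousAt).continuousWithinAt
    · exact fun t _ => ((hψderiv t).differentiableAt).differentiableWithinAt
    · intro t ht
      rw [interior_Icc] at ht
      rw [(hψderiv t).deriv]
      have hsub : ⟪gradg (c t), y - x⟫_ℝ - a = ⟪gradg (c t) - gradg x, y - x⟫_ℝ := by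
        rw [inner_sub_left]
      have hCS : ⟪gradg (c t) - gradg x, y - x⟫_ℝ ≤ ‖gradg (c t) - gradg x‖ * ‖y - x‖ :=
        real_inner_le_norm _ _
      have hnorm : ‖c t - x‖ = t * ‖y - x‖ := by
        have : c t - x = t • (y - x) := by simp [hc]
        rw [this, norm_smul, Real.norm_eq_abs, abs_of_pos ht.1]
      have hlipb : ‖gradg (c t) - gradg x‖ ≤ L * (t * ‖y - x‖) := by
        simpa [hnorm] using hlip (c t) x
      have : ⟪gradg (c t), y - x⟫_ℝ - a ≤ 2 * t * b := by
        rw [hsub]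
        calc ⟪gradg (c t) - gradg x, y - x⟫_ℝ ≤ ‖gradg (c t) - gradg x‖ * ‖y - x‖ := hCS
          _ ≤ L * (t * ‖y - x‖) * ‖y - x‖ := by
              apply mul_le_mul_of_nonneg_right hlipb (norm_nonneg _)
          _ = 2 * t * b := by rw [hb]; ring
      linarith
  have key : ψ 1 ≤ ψ 0 := hanti (by norm_num) (by norm_num) (by norm_num)
  have h0 : ψ 0 = g x := by simp [hψ, hc]
  have h1 : ψ 1 = g y - a - b := by simp [hψ, hc]
  rw [h0, h1] at key
  linarith

theorem stmt_12 {n : ℕ} (g : EuclideanSpace ℝ (Fin n) → ℝ)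
    (gradg : EuclideanSpace ℝ (Fin n) → EuclideanSpace ℝ (Fin n))
    (hgrad : ∀ x, HasGradientAt g (gradg x) x)
    (L : ℝ) (hL0 : 0 ≤ L) (hL1 : L ≤ 1)
    (hlip : ∀ x x', ‖gradg x - gradg x'‖ ≤ L * ‖x - x'‖) :
    (∀ y z : EuclideanSpace ℝ (Fin n),
      g y + ((1 - L) / 2) * ‖z - y‖ ^ 2 ≤
        g z - (1 / 2) * ‖gradg z‖ ^ 2 + (1 / 2) * ‖z - gradg z - y‖ ^ 2) ∧
    (∀ y : EuclideanSpace ℝ (Fin n),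
      g y - (1 / 2) * ‖gradg y‖ ^ 2 + (1 / 2) * ‖y - gradg y - y‖ ^ 2 = g y) ∧
    (L < 1 → ∀ y z : EuclideanSpace ℝ (Fin n),
      g z - (1 / 2) * ‖gradg z‖ ^ 2 + (1 / 2) * ‖z - gradg z - y‖ ^ 2 = g y → z = y) := by
  have main : ∀ y z : EuclideanSpace ℝ (Fin n),
      g y + ((1 - L) / 2) * ‖z - y‖ ^ 2 ≤
        g z - (1 / 2) * ‖gradg z‖ ^ 2 + (1 / 2) * ‖z - gradg z - y‖ ^ 2 := by
    intro y z
    have hdes := descent_aux g gradg hgrad L hlip z y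
    have hexp : ‖z - gradg z - y‖ ^ 2
        = ‖z - y‖ ^ 2 - 2 * ⟪z - y, gradg z⟫_ℝ + ‖gradg z‖ ^ 2 := by
      have : z - gradg z - y = (z - y) - gradg z := by abel
      rw [this, norm_sub_sq_real]
    have hinner : ⟪gradg z, y - z⟫_ℝ = - ⟪z - y, gradg z⟫_ℝ := by
      rw [real_inner_comm]
      rw [show y - z = -(z - y) by abel, inner_neg_left]
    have hnorm : ‖y - z‖ = ‖z - y‖ := by rw [← norm_neg]; congr 1; abel
    rw [hnorm, hinner] at hdes
    rw [hexp]
    linarith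
  refine ⟨main, fun y => ?_, fun hL y z heq => ?_⟩
  · have : y - gradg y - y = -(gradg y) := by abel
    rw [this, norm_neg]
    ring
  · have h := main y z
    rw [heq] at h
    have h2 : ((1 - L) / 2) * ‖z - y‖ ^ 2 ≤ 0 := by linarith
    have h3 : 0 < (1 - L) / 2 := by linarith
    have h4 : ‖z - y‖ ^ 2 ≤ 0 := by
      by_contra hcon
      push_neg at hcon
      nlinarith
    have : ‖z - y‖ = 0 := by
      have := sq_nonneg ‖z - y‖
      nlinarith [norm_nonneg (z - y)]
    exact sub_eq_zero.mp (norm_eq_zero.mp this)
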